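/- Let M1 = [[λ, 1-λ],[1-μ, μ]] be a 2×2 Markov matrix with λ + μ ≠ 2. A 2×2 complex matrix of the form P1·diag(2πk₁i, log(λ+μ-1) + 2πk₂i)·P1⁻¹, where P1 = [[1, 1-λ],[1, μ-1]] and k₁, k₂ ∈ ℤ (this requires λ+μ-1 > 0 when k₂ is such that log is defined; in general use any branch), is a real matrix if and only if k₁ = k₂ = 0 and λ + μ > 1. In that case it equals (1/(2-λ-μ))·[[q·p, -q·p],[-r·p, r·p]] with p = log(λ+μ-1), q = 1-λ, r = 1-μ. -/

import Mathlib

open Matrix Real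

/-- A Markov matrix: nonnegative entries, rows summing to one. -/
def IsMarkov {n : ℕ} (M : Matrix (Fin n) (Fin n) ℝ) : Prop :=
  (∀ i j, 0 ≤ M i j) ∧ ∀ i, ∑ j, M i j = 1

lemma aux_L (lam mu : ℝ) (h2 : lam + mu ≠ 2) (a b : ℂ) :
    (!![1, 1 - (lam : ℂ); 1, (mu : ℂ) - 1] : Matrix (Fin 2) (Fin 2) ℂ) * !![a, 0; 0, b] *
      (!![1, 1 - (lam : ℂ); 1, (mu : ℂ) - 1])⁻¹ =
      (((lam+mu-2 : ℝ):ℂ))⁻¹ • !![a*((mu:ℂ)-1) - (1-(lam:ℂ))*b, a*((lam:ℂ)-1)+(1-(lam:ℂ))*b;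
        ((mu:ℂ)-1)*(a-b), a*((lam:ℂ)-1)+((mu:ℂ)-1)*b] := by
  have hd : ((lam+mu-2:ℝ):ℂ) ≠ 0 := by
    exact_mod_cast sub_ne_zero.mpr h2
  have hd' : ((lam:ℂ)+mu-2) ≠ 0 := by
    have h' : ((lam+mu-2:ℝ):ℂ) = (lam:ℂ)+mu-2 := by push_cast; ring
    rw [← h']; exact hd
  have hP : (!![1, 1 - (lam : ℂ); 1, (mu : ℂ) - 1])⁻¹ =
      (((lam+mu-2:ℝ):ℂ))⁻¹ • !![(mu:ℂ)-1, (lam:ℂ)-1; -1, 1] := by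
    apply Matrix.inv_eq_right_inv
    ext i j
    fin_cases i <;> fin_cases j <;>
      simp [Matrix.mul_apply, Fin.sum_univ_succ] <;> field_simp <;> push_cast <;> ring
  rw [hP]
  ext i j
  fin_cases i <;> fin_cases j <;>
    simp [Matrix.mul_apply, Fin.sum_univ_succ] <;> ring

theorem upper_block_real_logarithm (lam mu : ℝ)
    (hM : IsMarkov !![lam, 1 - lam; 1 - mu, mu])
    (h2 : lam + mu ≠ 2) (h1 : lam + mu ≠ 1) (k₁ k₂ : ℤ) :
    let P1 : Matrix (Fin 2) (Fin 2) ℂ := !![1, 1 - (lam : ℂ); 1, (mu : ℂ) - 1]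
    let L : Matrix (Fin 2) (Fin 2) ℂ :=
      P1 * !![2 * Real.pi * k₁ * Complex.I, 0;
              0, Complex.log ((lam : ℂ) + mu - 1) + 2 * Real.pi * k₂ * Complex.I] * P1⁻¹
    ((∀ i j, (L i j).im = 0) ↔ (k₁ = 0 ∧ k₂ = 0 ∧ 1 < lam + mu)) ∧
    ((k₁ = 0 ∧ k₂ = 0 ∧ 1 < lam + mu) →
      L = ((1 / (2 - lam - mu)) •
        !![(1 - lam) * Real.log (lam + mu - 1), -((1 - lam) * Real.log (lam + mu - 1));
           -((1 - mu) * Real.log (lam + mu - 1)), (1 - mu) * Real.log (lam + mu - 1)]).map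
          Complex.ofReal) := by
  intro P1 L
  obtain ⟨hpos, -⟩ := hM
  have hl1 : 0 ≤ lam := by have := hpos 0 0; simpa using this
  have hl2 : 0 ≤ 1 - lam := by have := hpos 0 1; simpa using this
  have hm1 : 0 ≤ mu := by have := hpos 1 1; simpa using this
  have hm2 : 0 ≤ 1 - mu := by have := hpos 1 0; simpa using this
  set a : ℂ := 2 * Real.pi * k₁ * Complex.I with ha
  set b : ℂ := Complex.log ((lam : ℂ) + mu - 1) + 2 * Real.pi * k₂ * Complex.I with hb
  have hcast : ((lam:ℂ) + mu - 1) = ((lam + mu - 1 : ℝ) : ℂ) := by push_cast; ring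
  have haim : a.im = 2 * Real.pi * k₁ := by
    rw [ha]
    simp [Complex.mul_im, Complex.mul_re]
  have hbim : b.im = Complex.arg ((lam + mu - 1 : ℝ) : ℂ) + 2 * Real.pi * k₂ := by
    rw [hb, hcast]
    simp [Complex.add_im, Complex.log_im, Complex.mul_im, Complex.mul_re]
  have hL : L = (((lam+mu-2 : ℝ):ℂ))⁻¹ •
      !![a*((mu:ℂ)-1) - (1-(lam:ℂ))*b, a*((lam:ℂ)-1)+(1-(lam:ℂ))*b;
        ((mu:ℂ)-1)*(a-b), a*((lam:ℂ)-1)+((mu:ℂ)-1)*b] := aux_L lam mu h2 a b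
  have hdne : (lam + mu - 2 : ℝ) ≠ 0 := sub_ne_zero.mpr h2
  -- second part first
  have hpart2 : (k₁ = 0 ∧ k₂ = 0 ∧ 1 < lam + mu) →
      L = ((1 / (2 - lam - mu)) •
        !![(1 - lam) * Real.log (lam + mu - 1), -((1 - lam) * Real.log (lam + mu - 1));
           -((1 - mu) * Real.log (lam + mu - 1)), (1 - mu) * Real.log (lam + mu - 1)]).map
          Complex.ofReal := by
    rintro ⟨rfl, rfl, hlt⟩
    have ha0 : a = 0 := by simp [ha]
    have hb0 : b = ((Real.log (lam + mu - 1) : ℝ) : ℂ) := by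
      rw [hb, hcast, Complex.ofReal_log (by linarith)]
      simp
    have hd1 : ((lam:ℂ)+mu-2) ≠ 0 := by
      have heq : ((lam+mu-2:ℝ):ℂ) = (lam:ℂ)+mu-2 := by push_cast; ring
      rw [← heq]
      exact_mod_cast hdne
    have hd2 : (2-(lam:ℂ)-mu) ≠ 0 := by
      intro h
      apply hd1
      rw [show ((lam:ℂ)+mu-2) = -(2-(lam:ℂ)-mu) by ring, h]; ring
    rw [hL, ha0, hb0]
    ext i j
    fin_cases i <;> fin_cases j <;>
      · simp only [Matrix.smul_apply, Matrix.map_apply, Matrix.cons_val', Matrix.cons_val_zero,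
          Matrix.cons_val_one, Matrix.head_cons, Matrix.empty_val', Matrix.cons_val_fin_one,
          Matrix.head_fin_const, smul_eq_mul, Matrix.of_apply]
        push_cast
        field_simp
        ring
  refine ⟨⟨?_, ?_⟩, hpart2⟩
  · -- forward
    intro h
    have e00 := h 0 0
    have e01 := h 0 1
    have e10 := h 1 0
    rw [hL] at e00 e01 e10
    simp only [Matrix.smul_apply, Matrix.cons_val', Matrix.cons_val_zero, Matrix.cons_val_one,
      Matrix.head_cons, Matrix.head_fin_const, Matrix.empty_val', Matrix.cons_val_fin_one,
      smul_eq_mul, ← Complex.ofReal_inv, Complex.im_ofReal_mul] at e00 e01 e10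
    have hinv : (lam + mu - 2 : ℝ)⁻¹ ≠ 0 := inv_ne_zero hdne
    have f00 : (a*((mu:ℂ)-1) - (1-(lam:ℂ))*b).im = 0 := by
      rcases mul_eq_zero.mp e00 with h' | h'
      · exact absurd h' hinv
      · exact h'
    have f01 : (a*((lam:ℂ)-1)+(1-(lam:ℂ))*b).im = 0 := by
      rcases mul_eq_zero.mp e01 with h' | h'
      · exact absurd h' hinv
      · exact h'
    have f10 : (((mu:ℂ)-1)*(a-b)).im = 0 := by
      rcases mul_eq_zero.mp e10 with h' | h'
      · exact absurd h' hinv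
      · exact h'
    -- unfold ims
    have hare : a.re = 0 := by simp [ha]
    set β : ℝ := b.im with hβ
    have g00 : a.im * (mu - 1) - (1 - lam) * β = 0 := by
      simpa [Complex.sub_im, Complex.mul_im, hare, Complex.sub_re, Complex.one_re,
        Complex.ofReal_re, Complex.ofReal_im, Complex.one_im] using f00
    have g01 : a.im * (lam - 1) + (1 - lam) * β = 0 := by
      simpa [Complex.add_im, Complex.mul_im, hare, Complex.sub_re, Complex.one_re,
        Complex.ofReal_re, Complex.ofReal_im, Complex.one_im] using f01
    have g10 : (mu - 1) * (a.im - β) = 0 := by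
      simpa [Complex.sub_im, Complex.mul_im, hare, Complex.sub_re, Complex.one_re,
        Complex.ofReal_re, Complex.ofReal_im, Complex.one_im] using f10
    have hα0 : a.im = 0 := by
      have : a.im * (lam + mu - 2) = 0 := by linarith
      rcases mul_eq_zero.mp this with h' | h'
      · exact h'
      · exact absurd h' hdne
    have hβ0 : β = 0 := by
      rcases eq_or_ne lam 1 with hlam | hlam
      · have hmu : mu - 1 ≠ 0 := by
          intro h'; apply h2; rw [hlam]; linarith
        rcases mul_eq_zero.mp g10 with h' | h'
        · exact absurd h' hmu
        · rw [hα0] at h'; linarith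
      · have hl : 1 - lam ≠ 0 := sub_ne_zero.mpr (Ne.symm hlam)
        rw [hα0] at g01
        simp at g01
        rcases g01 with h' | h'
        · exact absurd (by linarith : (1:ℝ) - lam = 0) hl
        · exact h'
    have hk₁ : k₁ = 0 := by
      rw [haim] at hα0
      have hπ := Real.pi_pos
      have : (k₁ : ℝ) = 0 := by
        by_contra h'
        rcases mul_eq_zero.mp hα0 with h'' | h''
        · nlinarith
        · exact h' h''
      exact_mod_cast this
    have hgt : 1 < lam + mu := by
      rcases lt_or_gt_of_ne h1 with hlt | hgt
      · exfalso
        have harg : Complex.arg ((lam + mu - 1 : ℝ) : ℂ) = Real.pi :=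
          Complex.arg_ofReal_of_neg (by linarith)
        rw [hbim, harg] at hβ0
        have hπ := Real.pi_pos
        have : Real.pi * (1 + 2 * (k₂ : ℝ)) = 0 := by linarith
        rcases mul_eq_zero.mp this with h' | h'
        · linarith
        · have : (2 * k₂ : ℝ) = -1 := by linarith
          have h2k : (2 * k₂ : ℤ) = -1 := by exact_mod_cast this
          omega
      · exact hgt
    have hk₂ : k₂ = 0 := by
      have harg : Complex.arg ((lam + mu - 1 : ℝ) : ℂ) = 0 :=
        Complex.arg_ofReal_of_nonneg (by linarith)
      rw [hbim, harg] at hβ0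
      have hπ := Real.pi_pos
      have : (k₂ : ℝ) = 0 := by
        by_contra h'
        rcases mul_eq_zero.mp (by linarith : 2 * Real.pi * (k₂:ℝ) = 0) with h'' | h''
        · rcases mul_eq_zero.mp h'' with h3 | h3 <;> linarith
        · exact h' h''
      exact_mod_cast this
    exact ⟨hk₁, hk₂, hgt⟩
  · -- reverse
    intro hc i j
    rw [hpart2 hc]
    simp [Matrix.map_apply]
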